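/- Let R be a finite commutative ring of characteristic p with Jacobson radical J satisfying J² = {0}, and let S be a semisimple subring with R = S ⊕ J, where S = F₁ ⊕ ⋯ ⊕ F_n is a direct sum of finite fields with identities e₁,…,e_n. Then for any ideal I of R contained in J: (1) each e_iI is an ideal of R and I = ⊕_{i=1}^n e_iI; (2) there exists an ideal Ī of R with J = I ⊕ Ī. -/

import Mathlib

/-- Subideal decomposition: let `R` be a finite commutative ring of characteristic
`p` with Jacobson radical `J` satisfying `J² = 0`, and let `S` be a semisimple
complement of `J` isomorphic to a direct product of finite fields `F i`, with
`e i` the image in `R` of the `i`-th primitive idempotent.  Then for every ideal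
`I ≤ J`: each `e i * I` is an ideal of `R`, `I` is the (internal direct) sum of
the `e i * I`, and `I` has an ideal complement in `J`. -/
theorem stmt_11 {R : Type*} [CommRing R] [Finite R] (p : ℕ) (hp : p.Prime) [CharP R p]
    (hJ2 : ∀ x ∈ Ideal.jacobson (⊥ : Ideal R), ∀ y ∈ Ideal.jacobson (⊥ : Ideal R), x * y = 0)
    (S : Subring R)
    (hdisj : ∀ x ∈ S, x ∈ Ideal.jacobson (⊥ : Ideal R) → x = 0)
    (hsum : ∀ r : R, ∃ s ∈ S, r - s ∈ Ideal.jacobson (⊥ : Ideal R))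
    (n : ℕ) (F : Fin n → Type*) [∀ i, Field (F i)] [∀ i, Fintype (F i)]
    (iso : S ≃+* ∀ i, F i) (e : Fin n → R)
    (he : ∀ i, e i = (iso.symm (Pi.single i 1) : R))
    (I : Ideal R) (hI : I ≤ Ideal.jacobson (⊥ : Ideal R)) :
    (∀ i, ∃ Ei : Ideal R, (Ei : Set R) = (fun x => e i * x) '' (I : Set R)) ∧
      (∀ x ∈ I, x = ∑ i, e i * x) ∧
      (∀ i j, i ≠ j → ∀ x ∈ I, ∀ y ∈ I, e i * x = e j * y → e i * x = 0) ∧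
      (∃ Ibar : Ideal R, Ibar ≤ Ideal.jacobson (⊥ : Ideal R) ∧
        I ⊓ Ibar = ⊥ ∧ I ⊔ Ibar = Ideal.jacobson (⊥ : Ideal R)) := by
  set J := Ideal.jacobson (⊥ : Ideal R) with hJdef
  -- products of Pi.single
  have hsm : ∀ (i : Fin n) (a b : F i),
      (Pi.single i a : ∀ k, F k) * Pi.single i b = Pi.single i (a * b) := by
    intro i a b
    funext k
    by_cases h : k = i
    · subst h; simp
    · simp [Pi.single_apply, h]
  have hsm' : ∀ (i j : Fin n), i ≠ j → ∀ (a : F i) (b : F j),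
      (Pi.single i a : ∀ k, F k) * Pi.single j b = 0 := by
    intro i j hij a b
    funext k
    by_cases h : k = i
    · subst h
      simp [Pi.single_apply, hij.symm]
    · simp [Pi.single_apply, h]
  -- e i products
  have hee : ∀ i, e i * e i = e i := by
    intro i
    rw [he i, ← Subring.coe_mul, ← map_mul, hsm, one_mul]
  have heij : ∀ i j, i ≠ j → e i * e j = 0 := by
    intro i j hij
    rw [he i, he j, ← Subring.coe_mul, ← map_mul, hsm' i j hij, map_zero]
    rfl
  have hsum1 : ∑ i, e i = (1 : R) := by
    have h1 : (∑ i, iso.symm (Pi.single i 1)) = (1 : S) := by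
      rw [← map_sum]
      have : (∑ i, Pi.single i (1 : F i) : ∀ i, F i) = 1 := by
        simpa using Finset.univ_sum_single (1 : ∀ i, F i)
      rw [this, map_one]
    calc ∑ i, e i = ((∑ i, iso.symm (Pi.single i 1) : S) : R) := by
          push_cast [he]; rfl
      _ = 1 := by rw [h1]; rfl
  -- key simplicity lemma
  have hkey : ∀ (x : R), x ∈ J → ∀ (i : Fin n) (r : R), r * (e i * x) ≠ 0 →
      e i * x ∈ Ideal.span {r * (e i * x)} := by
    intro x hx i r hne
    obtain ⟨s, hsS, hjJ⟩ := hsum r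
    have hex : e i * x ∈ J := J.mul_mem_left _ hx
    have hjw : (r - s) * (e i * x) = 0 := hJ2 _ hjJ _ hex
    have hrs : r * (e i * x) = s * (e i * x) := by
      have h0 : r * (e i * x) - s * (e i * x) = 0 := by rw [← sub_mul, hjw]
      exact sub_eq_zero.mp h0
    set a : F i := iso ⟨s, hsS⟩ i with ha
    have hse : s * e i = ((iso.symm (Pi.single i a) : S) : R) := by
      have h1 : iso ⟨s, hsS⟩ * Pi.single i 1 = Pi.single i a := by
        funext k
        by_cases h : k = i
        · subst h; simp [ha]
        · simp [Pi.single_apply, h]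
      have h2 : (⟨s, hsS⟩ : S) * iso.symm (Pi.single i 1) = iso.symm (Pi.single i a) := by
        apply iso.injective
        rw [map_mul, RingEquiv.apply_symm_apply, RingEquiv.apply_symm_apply, h1]
      calc s * e i = ((⟨s, hsS⟩ * iso.symm (Pi.single i 1) : S) : R) := by
            rw [he i, Subring.coe_mul]
        _ = _ := by rw [h2]
    by_cases hA : a = 0
    · exfalso
      apply hne
      rw [hrs, ← mul_assoc, hse, hA]
      simp
    · set s' : R := ((iso.symm (Pi.single i a⁻¹) : S) : R) with hs'
      have hs'e : s' * (s * e i) = e i := by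
        rw [hse, hs', ← Subring.coe_mul, ← map_mul, hsm, inv_mul_cancel₀ hA, he i]
      rw [Ideal.mem_span_singleton]
      refine ⟨s', ?_⟩
      calc e i * x = (s' * (s * e i)) * x := by rw [hs'e]
        _ = r * (e i * x) * s' := by rw [hrs]; ring
  -- finiteness of ideals
  have : Finite (Ideal R) :=
    Finite.of_injective (fun K : Ideal R => (K : Set R)) SetLike.coe_injective
  -- maximal complement
  obtain ⟨K, ⟨hKJ, hKI⟩, hmax⟩ :=
    Set.Finite.exists_maximalFor id {K : Ideal R | K ≤ J ∧ I ⊓ K = ⊥}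
      (Set.toFinite _) ⟨⊥, bot_le, inf_bot_eq _⟩
  simp only [id] at hmax
  have hsupJ : I ⊔ K = J := by
    refine le_antisymm (sup_le hI hKJ) ?_
    intro x hx
    have hxsum : x = ∑ i, e i * x := by rw [← Finset.sum_mul, hsum1, one_mul]
    have hmem : ∀ i, e i * x ∈ I ⊔ K := by
      intro i
      by_contra hg
      set g := e i * x with hgdef
      have hgJ : g ∈ J := J.mul_mem_left _ hx
      set K' := K ⊔ Ideal.span {g} with hK'
      have hK'J : K' ≤ J := sup_le hKJ ((Ideal.span_le).mpr (by simpa using hgJ))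
      have hIK' : I ⊓ K' = ⊥ := by
        refine le_bot_iff.mp ?_
        rintro w ⟨hwI, hwK'⟩
        obtain ⟨k, hk, t, ht, hw⟩ := Submodule.mem_sup.mp hwK'
        have htIK : t ∈ I ⊔ K := by
          have : t = w - k := by rw [← hw]; ring
          rw [this]
          exact Submodule.sub_mem _ (Ideal.mem_sup_left hwI) (Ideal.mem_sup_right hk)
        by_cases h0 : t = 0
        · have : w ∈ I ⊓ K := ⟨hwI, by rw [← hw, h0, add_zero]; exact hk⟩
          rw [hKI] at this
          exact this
        · exfalso
          obtain ⟨c, hc⟩ := Ideal.mem_span_singleton.mp ht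
          have hcg : c * g ≠ 0 := by
            intro h; apply h0; rw [hc, mul_comm] at *; rw [hc]; rw [mul_comm] at h; exact h
          have := hkey x hx i c hcg
          have hspan : Ideal.span {c * (e i * x)} ≤ I ⊔ K := by
            rw [Ideal.span_le]
            intro z hz
            simp only [Set.mem_singleton_iff] at hz
            subst hz
            have : c * (e i * x) = t := by rw [hc]; ring
            rw [this]
            exact htIK
          exact hg (hspan this)
      have hKK' : K = K' := le_antisymm le_sup_left (hmax ⟨hK'J, hIK'⟩ le_sup_left)
      apply hg
      have : g ∈ K' := Ideal.mem_sup_right (Ideal.subset_span (Set.mem_singleton g))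
      rw [← hKK'] at this
      exact Ideal.mem_sup_right this
    rw [hxsum]
    exact Submodule.sum_mem _ fun i _ => hmem i
  refine ⟨?_, ?_, ?_, K, hKJ, hKI, hsupJ⟩
  · intro i
    refine ⟨Submodule.map (LinearMap.mulLeft R (e i)) I, ?_⟩
    ext z
    simp [Submodule.mem_map, Set.mem_image, LinearMap.mulLeft_apply]
  · intro x _
    rw [← Finset.sum_mul, hsum1, one_mul]
  · intro i j hij x _ y _ hxy
    calc e i * x = e i * (e i * x) := by rw [← mul_assoc, hee]
      _ = e i * (e j * y) := by rw [hxy]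
      _ = (e i * e j) * y := by ring
      _ = 0 := by rw [heij i j hij, zero_mul]
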